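/- arXiv:2504.17302 — 5 statements merged into one kernel-verified Lean document; each statement's English description precedes it below -/
import Mathlib

section
/- If λ is an integer and both λ and -2λ belong to the set M = {(2 + p - p²)/2 : p ∈ ℤ}, then λ = 0 or λ = 1. -/
theorem eigenvalue_zero_or_one (l : ℤ)
    (h1 : (l : ℚ) ∈ {x : ℚ | ∃ p : ℤ, x = (2 + p - p ^ 2) / 2})
    (h2 : ((-2 * l : ℤ) : ℚ) ∈ {x : ℚ | ∃ p : ℤ, x = (2 + p - p ^ 2) / 2}) :
    l = 0 ∨ l = 1 := by
  obtain ⟨p, hp⟩ := h1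
  obtain ⟨q, hq⟩ := h2
  rw [eq_div_iff (by norm_num)] at hp hq
  have e1 : l * 2 = 2 + p - p ^ 2 := by exact_mod_cast hp
  have e2 : (-2 * l) * 2 = 2 + q - q ^ 2 := by exact_mod_cast hq
  have key : (2 * q - 1) ^ 2 + 2 * (2 * p - 1) ^ 2 = 27 := by linear_combination 8 * e1 + 4 * e2
  have hb : -1 ≤ p ∧ p ≤ 2 := by constructor <;> nlinarith [sq_nonneg (2 * q - 1)]
  obtain ⟨hb1, hb2⟩ := hb
  interval_cases p <;> omega
end

section
/- Let V : (ℝ²)ⁿ → ℝ be invariant under simultaneous rotation of all n planar position vectors, smooth near a point d = (d₁,...,dₙ) satisfying ∇V(d) = μ M d with μ ≠ 0 and M = diag(m₁I₂,...,mₙI₂) invertible. Then the vector Ĵd = (J d₁, ..., J dₙ), where J = [[0,-1],[1,0]], is an eigenvector of H(d) = μ⁻¹ M⁻¹ ∇²V(d) with eigenvalue 1 (provided Ĵd ≠ 0). -/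
open Matrix

/-- The continuous linear functional `v ↦ ∑ i, ⟪g i, v i⟫` on `n` copies of the
Euclidean plane, representing the gradient `g` of a scalar function. -/
noncomputable def gradCLM {n : ℕ} (g : Fin n → EuclideanSpace ℝ (Fin 2)) :
    (Fin n → EuclideanSpace ℝ (Fin 2)) →L[ℝ] ℝ :=
  ∑ i, (innerSL ℝ (g i)).comp (ContinuousLinearMap.proj i)

lemma gradCLM_apply {n : ℕ} (g v : Fin n → EuclideanSpace ℝ (Fin 2)) :
    gradCLM g v = ∑ i, inner ℝ (g i) (v i) := by
  simp [gradCLM]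

lemma gradCLM_single {n : ℕ} (g : Fin n → EuclideanSpace ℝ (Fin 2)) (j : Fin n)
    (w : EuclideanSpace ℝ (Fin 2)) :
    gradCLM g (Pi.single j w) = (inner ℝ (g j) w : ℝ) := by
  rw [gradCLM_apply, Fintype.sum_eq_single j]
  · rw [Pi.single_eq_same]
  · intro i hi
    rw [Pi.single_eq_of_ne hi, inner_zero_right]

lemma toEuclideanLin_mul_apply (A B : Matrix (Fin 2) (Fin 2) ℝ)
    (x : EuclideanSpace ℝ (Fin 2)) :
    Matrix.toEuclideanLin (A * B) x =
      Matrix.toEuclideanLin A (Matrix.toEuclideanLin B x) := by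
  simp [Matrix.toEuclideanLin_apply, Matrix.mulVec_mulVec]

lemma toEuclideanLin_one_apply (x : EuclideanSpace ℝ (Fin 2)) :
    Matrix.toEuclideanLin (1 : Matrix (Fin 2) (Fin 2) ℝ) x = x := by
  simp [Matrix.toEuclideanLin_apply]

lemma inner_toEuclideanLin (A : Matrix (Fin 2) (Fin 2) ℝ)
    (x y : EuclideanSpace ℝ (Fin 2)) :
    (inner ℝ (Matrix.toEuclideanLin Aᵀ x) y : ℝ) = inner ℝ x (Matrix.toEuclideanLin A y) := by
  have h : Matrix.toEuclideanLin Aᴴ = LinearMap.adjoint (Matrix.toEuclideanLin A) :=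
    Matrix.toEuclideanLin_conjTranspose_eq_adjoint A
  have hT : Aᴴ = Aᵀ := by
    ext i j; simp [Matrix.conjTranspose_apply]
  rw [← hT, h, LinearMap.adjoint_inner_left]

/-- Equivariance of the gradient under rotations. -/
lemma grad_equivariant {n : ℕ}
    (V : (Fin n → EuclideanSpace ℝ (Fin 2)) → ℝ)
    (G : (Fin n → EuclideanSpace ℝ (Fin 2)) → (Fin n → EuclideanSpace ℝ (Fin 2)))
    (s : Set (Fin n → EuclideanSpace ℝ (Fin 2)))
    (hsrot : ∀ R : Matrix (Fin 2) (Fin 2) ℝ, Rᵀ * R = 1 → R.det = 1 →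
      ∀ q ∈ s, (fun i => Matrix.toEuclideanLin R (q i)) ∈ s)
    (hrot : ∀ R : Matrix (Fin 2) (Fin 2) ℝ, Rᵀ * R = 1 → R.det = 1 →
      ∀ q, V (fun i => Matrix.toEuclideanLin R (q i)) = V q)
    (hgrad : ∀ q ∈ s, HasFDerivAt V (gradCLM (G q)) q)
    (q : Fin n → EuclideanSpace ℝ (Fin 2)) (hq : q ∈ s)
    (R : Matrix (Fin 2) (Fin 2) ℝ) (hR : Rᵀ * R = 1) (hdet : R.det = 1) :
    G (fun i => Matrix.toEuclideanLin R (q i)) =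
      fun i => Matrix.toEuclideanLin R (G q i) := by
  set L : (Fin n → EuclideanSpace ℝ (Fin 2)) →ₗ[ℝ] (Fin n → EuclideanSpace ℝ (Fin 2)) :=
    LinearMap.pi (fun i => (Matrix.toEuclideanLin R).comp (LinearMap.proj i)) with hL
  set Lc : (Fin n → EuclideanSpace ℝ (Fin 2)) →L[ℝ] (Fin n → EuclideanSpace ℝ (Fin 2)) :=
    LinearMap.toContinuousLinearMap L with hLc
  have hLcapp : ∀ p, Lc p = fun i => Matrix.toEuclideanLin R (p i) := by
    intro p; funext i; rfl
  have hRq : (fun i => Matrix.toEuclideanLin R (q i)) ∈ s := hsrot R hR hdet q hq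
  have hmem : Lc q ∈ s := by rw [hLcapp q]; exact hRq
  have h1 : HasFDerivAt (V ∘ Lc) ((gradCLM (G (Lc q))).comp Lc) q :=
    (hgrad _ hmem).comp q Lc.hasFDerivAt
  have h2 : V ∘ Lc = V := by
    funext p
    simp only [Function.comp_apply, hLcapp]
    exact hrot R hR hdet p
  rw [h2] at h1
  have h3 : (gradCLM (G (Lc q))).comp Lc = gradCLM (G q) :=
    h1.unique (hgrad q hq)
  have key : ∀ j w, (inner ℝ (G (Lc q) j) (Matrix.toEuclideanLin R w) : ℝ) =
      inner ℝ (G q j) w := by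
    intro j w
    have h := congrFun (congrArg (fun (f : _ →L[ℝ] ℝ) => (f : _ → ℝ)) h3) (Pi.single j w)
    simp only [ContinuousLinearMap.comp_apply] at h
    rw [gradCLM_single] at h
    have hsingle : Lc (Pi.single j w) = Pi.single j (Matrix.toEuclideanLin R w) := by
      rw [hLcapp]
      funext i
      by_cases hij : i = j
      · subst hij; simp
      · simp [Pi.single_eq_of_ne hij]
    rw [hsingle, gradCLM_single] at h
    exact h
  have hRRT : R * Rᵀ = 1 := mul_eq_one_comm.mp hR
  have main : G (Lc q) = fun i => Matrix.toEuclideanLin R (G q i) := by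
    funext j
    have h4 : Matrix.toEuclideanLin Rᵀ (G (Lc q) j) = G q j := by
      apply ext_inner_right ℝ
      intro w
      rw [inner_toEuclideanLin]
      exact key j w
    have h5 := congrArg (Matrix.toEuclideanLin R) h4
    rw [← toEuclideanLin_mul_apply, hRRT, toEuclideanLin_one_apply] at h5
    exact h5
  rw [← hLcapp q]
  exact main

theorem rotation_vector_eigenvector_one {n : ℕ}
    (V : (Fin n → EuclideanSpace ℝ (Fin 2)) → ℝ)
    (G : (Fin n → EuclideanSpace ℝ (Fin 2)) → (Fin n → EuclideanSpace ℝ (Fin 2)))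
    (HessOp : (Fin n → EuclideanSpace ℝ (Fin 2)) →
      ((Fin n → EuclideanSpace ℝ (Fin 2)) →L[ℝ] (Fin n → EuclideanSpace ℝ (Fin 2))))
    (s : Set (Fin n → EuclideanSpace ℝ (Fin 2))) (hs : IsOpen s)
    (d : Fin n → EuclideanSpace ℝ (Fin 2)) (hds : d ∈ s)
    -- `s` is invariant under simultaneous rotations
    (hsrot : ∀ R : Matrix (Fin 2) (Fin 2) ℝ, Rᵀ * R = 1 → R.det = 1 →
      ∀ q ∈ s, (fun i => Matrix.toEuclideanLin R (q i)) ∈ s)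
    -- rotation invariance of the potential
    (hrot : ∀ R : Matrix (Fin 2) (Fin 2) ℝ, Rᵀ * R = 1 → R.det = 1 →
      ∀ q, V (fun i => Matrix.toEuclideanLin R (q i)) = V q)
    -- `G` is the gradient of `V` and `HessOp` its second derivative on `s`
    (hgrad : ∀ q ∈ s, HasFDerivAt V (gradCLM (G q)) q)
    (hhess : ∀ q ∈ s, HasFDerivAt G (HessOp q) q)
    (m : Fin n → ℝ) (hm : ∀ i, 0 < m i) (μ : ℝ) (hμ : μ ≠ 0)
    -- the Darboux point condition ∇V(d) = μ M d
    (hDar : G d = fun i => (μ * m i) • d i)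
    (hJd : (fun i => Matrix.toEuclideanLin !![0, -1; 1, 0] (d i)) ≠ 0) :
    -- H(d) (Ĵd) = Ĵd, written as ∇²V(d) (Ĵd) = μ M (Ĵd)
    HessOp d (fun i => Matrix.toEuclideanLin !![0, -1; 1, 0] (d i)) =
      fun i => (μ * m i) • Matrix.toEuclideanLin !![0, -1; 1, 0] (d i) := by
  set J : Matrix (Fin 2) (Fin 2) ℝ := !![0, -1; 1, 0] with hJ
  set Jd : Fin n → EuclideanSpace ℝ (Fin 2) := fun i => Matrix.toEuclideanLin J (d i)
    with hJdd
  -- the rotation family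
  set ρ : ℝ → Matrix (Fin 2) (Fin 2) ℝ :=
    fun t => !![Real.cos t, -Real.sin t; Real.sin t, Real.cos t] with hρ
  have hρT : ∀ t, (ρ t)ᵀ = !![Real.cos t, Real.sin t; -Real.sin t, Real.cos t] := by
    intro t
    ext i j
    fin_cases i <;> fin_cases j <;> rfl
  have hρorth : ∀ t, (ρ t)ᵀ * ρ t = 1 := by
    intro t
    rw [hρT]
    ext i j
    fin_cases i <;> fin_cases j <;>
      simp [hρ, Matrix.mul_apply, Fin.sum_univ_two] <;>
      nlinarith [Real.sin_sq_add_cos_sq t]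
  have hρdet : ∀ t, (ρ t).det = 1 := by
    intro t
    simp only [hρ, Matrix.det_fin_two_of]
    nlinarith [Real.sin_sq_add_cos_sq t]
  have hρdecomp : ∀ t, ρ t = Real.cos t • (1 : Matrix (Fin 2) (Fin 2) ℝ) + Real.sin t • J := by
    intro t
    ext i j
    fin_cases i <;> fin_cases j <;> simp [hρ, hJ] <;> ring
  -- the curve
  set c : ℝ → (Fin n → EuclideanSpace ℝ (Fin 2)) :=
    fun t => fun i => Matrix.toEuclideanLin (ρ t) (d i) with hc
  have hcval : ∀ t, c t = fun i => Real.cos t • d i + Real.sin t • Jd i := by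
    intro t
    funext i
    show Matrix.toEuclideanLin (ρ t) (d i) = _
    rw [hρdecomp t]
    simp only [map_add, _root_.map_smul, LinearMap.add_apply, LinearMap.smul_apply,
      toEuclideanLin_one_apply]
    rfl
  have hc0 : c 0 = d := by
    rw [hcval]; funext i; simp
  -- derivative of the curve at 0
  have hcderiv : HasDerivAt c Jd 0 := by
    rw [hasDerivAt_pi]
    intro i
    have h1 : HasDerivAt (fun t : ℝ => Real.cos t • d i + Real.sin t • Jd i)
        ((-Real.sin 0) • d i + Real.cos 0 • Jd i) 0 :=
      ((Real.hasDerivAt_cos 0).smul_const (d i)).add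
        ((Real.hasDerivAt_sin 0).smul_const (Jd i))
    have h2 : ((-Real.sin 0) • d i + Real.cos 0 • Jd i) = Jd i := by simp
    rw [h2] at h1
    refine h1.congr_of_eventuallyEq ?_
    filter_upwards with t
    rw [hcval]
  -- G ∘ c equals the explicit formula, for all t
  have hGc : ∀ t, G (c t) = fun i => (μ * m i) • (Real.cos t • d i + Real.sin t • Jd i) := by
    intro t
    have heq := grad_equivariant V G s hsrot hrot hgrad d hds (ρ t) (hρorth t) (hρdet t)
    funext i
    calc G (c t) i = Matrix.toEuclideanLin (ρ t) (G d i) := congrFun heq i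
      _ = Matrix.toEuclideanLin (ρ t) ((μ * m i) • d i) := by rw [hDar]
      _ = (μ * m i) • Matrix.toEuclideanLin (ρ t) (d i) := by
          exact LinearMap.map_smul (Matrix.toEuclideanLin (ρ t)) _ _
      _ = (μ * m i) • (Real.cos t • d i + Real.sin t • Jd i) := by
          rw [show Matrix.toEuclideanLin (ρ t) (d i) = c t i from rfl, hcval]
  -- derivative of G ∘ c at 0 via chain rule
  have hGC1 : HasDerivAt (fun t => G (c t)) (HessOp d Jd) 0 := by
    have hG : HasFDerivAt G (HessOp d) (c 0) := hc0 ▸ hhess d hds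
    exact hG.comp_hasDerivAt 0 hcderiv
  -- derivative of explicit formula at 0
  have hGC2 : HasDerivAt (fun t => G (c t)) (fun i => (μ * m i) • Jd i) 0 := by
    have h : HasDerivAt
        (fun t => fun i => (μ * m i) • (Real.cos t • d i + Real.sin t • Jd i))
        (fun i => (μ * m i) • Jd i) 0 := by
      rw [hasDerivAt_pi]
      intro i
      have h1 : HasDerivAt (fun t : ℝ => Real.cos t • d i + Real.sin t • Jd i)
          ((-Real.sin 0) • d i + Real.cos 0 • Jd i) 0 :=
        ((Real.hasDerivAt_cos 0).smul_const (d i)).add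
          ((Real.hasDerivAt_sin 0).smul_const (Jd i))
      have h2 := h1.const_smul (μ * m i)
      simp only [Real.sin_zero, Real.cos_zero, neg_zero, zero_smul, one_smul,
        zero_add] at h2
      exact h2
    refine h.congr_of_eventuallyEq ?_
    filter_upwards with t
    exact hGc t
  exact hGC1.unique hGC2
end

section
/- Let d be a collinear configuration with dᵢ = (xᵢ, 0), and let C be the n×n matrix with entries C_{ij} = -γᵢⱼ/(μ mᵢ |xᵢ-xⱼ|³) for i≠j and C_{ii} = -Σ_{j≠i} C_{ij}. If e = (e₁,...,eₙ) is an eigenvector of C with eigenvalue λ, then (e₁,0,e₂,0,...,eₙ,0) is an eigenvector of the 2n×2n matrix H(d) with eigenvalue -2λ, and (0,e₁,0,e₂,...,0,eₙ) is an eigenvector of H(d) with eigenvalue λ. -/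
open Matrix

/-- The n×n matrix `C` of a collinear configuration:
`C_{ij} = -γᵢⱼ/(μ mᵢ |xᵢ-xⱼ|³)` for `i ≠ j` and `C_{ii} = -∑_{j≠i} C_{ij}`. -/
noncomputable def Cmat {n : ℕ} (γ : Fin n → Fin n → ℝ) (m : Fin n → ℝ) (μ : ℝ)
    (x : Fin n → ℝ) : Matrix (Fin n) (Fin n) ℝ :=
  fun i j =>
    if i = j then
      -∑ l ∈ Finset.univ.filter (· ≠ i), (-(γ i l / (μ * m i * |x i - x l| ^ 3)))
    else -(γ i j / (μ * m i * |x i - x j| ^ 3))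

/-- The matrix `D = diag(-2, 1)`. -/
noncomputable def Dmat : Matrix (Fin 2) (Fin 2) ℝ := Matrix.diagonal ![-2, 1]

/-- The 2n×2n matrix `H(d)` of a collinear configuration, with 2×2 blocks
`H_{ij} = C_{ij} · D`. -/
noncomputable def HmatCollinear {n : ℕ} (γ : Fin n → Fin n → ℝ) (m : Fin n → ℝ)
    (μ : ℝ) (x : Fin n → ℝ) : Matrix (Fin n × Fin 2) (Fin n × Fin 2) ℝ :=
  fun p q => Cmat γ m μ x p.1 q.1 * Dmat p.2 q.2

theorem collinear_eigenvector_doubling {n : ℕ}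
    (γ : Fin n → Fin n → ℝ) (hγ : ∀ i j, γ i j = γ j i)
    (m : Fin n → ℝ) (hm : ∀ i, 0 < m i) (μ : ℝ) (hμ : μ ≠ 0)
    (x : Fin n → ℝ) (hsep : ∀ i j, i ≠ j → x i ≠ x j)
    (e : Fin n → ℝ) (lam : ℝ)
    (he : (Cmat γ m μ x).mulVec e = lam • e) :
    (HmatCollinear γ m μ x).mulVec (fun p => if p.2 = 0 then e p.1 else 0) =
        (-2 * lam) • (fun p => if p.2 = 0 then e p.1 else 0) ∧
      (HmatCollinear γ m μ x).mulVec (fun p => if p.2 = 1 then e p.1 else 0) =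
        lam • (fun p => if p.2 = 1 then e p.1 else 0) := by
  have key : ∀ (k : Fin 2) (p : Fin n × Fin 2),
      (HmatCollinear γ m μ x).mulVec (fun q => if q.2 = k then e q.1 else 0) p
        = Dmat p.2 k * (lam * e p.1) := by
    intro k p
    have hC : ∑ j, Cmat γ m μ x p.1 j * e j = lam * e p.1 := by
      have := congrFun he p.1
      simpa [mulVec, dotProduct] using this
    simp only [mulVec, dotProduct, HmatCollinear, Fintype.sum_prod_type,
      mul_ite, mul_zero, Finset.sum_ite_eq', Finset.mem_univ, if_true]
    rw [← hC, Finset.mul_sum]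
    exact Finset.sum_congr rfl (fun j _ => by ring)
  constructor <;> funext p <;> rw [key] <;> rcases p with ⟨i, k⟩ <;> fin_cases k <;>
    simp [Dmat] <;> ring
end

section
/- The matrix C defined by C_{ij} = -γᵢⱼ/(μ mᵢ|xᵢ-xⱼ|³) (i≠j), C_{ii} = -Σ_{j≠i}C_{ij}, where the xᵢ come from a collinear central configuration of the charged n-body problem, has 0 as an eigenvalue (with eigenvector (1,1,...,1)) and 1 as an eigenvalue (with eigenvector (x₁,...,xₙ) when it is not proportional to (1,...,1)). -/
open Matrix

theorem Cmat_eigenvalues_zero_and_one {n : ℕ}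
    (γ : Fin n → Fin n → ℝ) (hγ : ∀ i j, γ i j = γ j i)
    (m : Fin n → ℝ) (hm : ∀ i, 0 < m i) (μ : ℝ) (hμ : μ ≠ 0)
    (x : Fin n → ℝ) (hsep : ∀ i j, i ≠ j → x i ≠ x j)
    -- the collinear central configuration equations
    (hcc : ∀ i, ∑ j ∈ Finset.univ.filter (· ≠ i),
      γ i j * (x i - x j) / |x i - x j| ^ 3 = μ * m i * x i)
    -- center-of-mass frame, nontrivial configuration
    (hcm : ∑ i, m i * x i = 0) (hne : ∃ i j, x i ≠ x j) :
    (Cmat γ m μ x).mulVec (fun _ => 1) = (0 : ℝ) • (fun _ => (1 : ℝ)) ∧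
      (Cmat γ m μ x).mulVec x = (1 : ℝ) • x ∧
      ¬∃ c : ℝ, x = fun _ => c := by
  have hsplit : ∀ (i : Fin n) (g : Fin n → ℝ),
      ∑ j, g j = g i + ∑ j ∈ Finset.univ.filter (· ≠ i), g j := by
    intro i g
    rw [Finset.filter_ne', ← Finset.add_sum_erase Finset.univ g (Finset.mem_univ i)]
  have hdiag : ∀ i, Cmat γ m μ x i i
      = -∑ l ∈ Finset.univ.filter (· ≠ i), -(γ i l / (μ * m i * |x i - x l| ^ 3)) := by
    intro i; simp [Cmat]
  have hoff : ∀ i j, j ∈ Finset.univ.filter (· ≠ i) →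
      Cmat γ m μ x i j = -(γ i j / (μ * m i * |x i - x j| ^ 3)) := by
    intro i j hj
    simp only [Finset.mem_filter] at hj
    simp only [Cmat, if_neg (Ne.symm hj.2)]
  refine ⟨?_, ?_, ?_⟩
  · funext i
    simp only [Matrix.mulVec, dotProduct, mul_one, Pi.smul_apply, smul_eq_mul, zero_mul]
    rw [hsplit i (fun j => Cmat γ m μ x i j), hdiag i]
    have hsum : ∑ j ∈ Finset.univ.filter (· ≠ i), Cmat γ m μ x i j
        = ∑ j ∈ Finset.univ.filter (· ≠ i), -(γ i j / (μ * m i * |x i - x j| ^ 3)) :=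
      Finset.sum_congr rfl (hoff i)
    rw [hsum, Finset.sum_neg_distrib, neg_neg, add_neg_cancel]
  · funext i
    simp only [Matrix.mulVec, dotProduct, Pi.smul_apply, smul_eq_mul, one_mul]
    rw [hsplit i (fun j => Cmat γ m μ x i j * x j), hdiag i]
    have hsum : ∑ j ∈ Finset.univ.filter (· ≠ i), Cmat γ m μ x i j * x j
        = ∑ j ∈ Finset.univ.filter (· ≠ i), -(γ i j / (μ * m i * |x i - x j| ^ 3)) * x j :=
      Finset.sum_congr rfl (fun j hj => by rw [hoff i j hj])
    rw [hsum]
    have hmne : μ * m i ≠ 0 := mul_ne_zero hμ (hm i).ne'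
    have key := hcc i
    have step : (-∑ l ∈ Finset.univ.filter (· ≠ i), -(γ i l / (μ * m i * |x i - x l| ^ 3))) * x i
        + ∑ j ∈ Finset.univ.filter (· ≠ i), -(γ i j / (μ * m i * |x i - x j| ^ 3)) * x j
        = (1 / (μ * m i)) * ∑ j ∈ Finset.univ.filter (· ≠ i),
            γ i j * (x i - x j) / |x i - x j| ^ 3 := by
      rw [Finset.sum_neg_distrib, neg_neg, Finset.sum_mul, Finset.mul_sum,
        ← Finset.sum_add_distrib]
      refine Finset.sum_congr rfl fun j hj => ?_
      have habs : |x i - x j| ^ 3 ≠ 0 := by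
        simp only [Finset.mem_filter] at hj
        have : x i - x j ≠ 0 := sub_ne_zero.mpr (hsep i j (Ne.symm hj.2))
        positivity
      field_simp
      ring
    rw [step, key]
    field_simp
    exact mul_div_cancel_left₀ (x i) (hm i).ne'
  · rintro ⟨c, rfl⟩
    obtain ⟨i, j, h⟩ := hne
    exact h rfl
end

section
/- With α₂ given by α₂ = u²[α₃m₃(u+1)²(m₁(u+1)+m₂u) + α₁m₂(m₃u-m₁)]/[m₁(u+1)²(m₃(u+1)+m₂)], define λ₁ = (m₁+m₂+m₃)[α₁+α₃(u+1)²]/(m₁(u+1)²[m₃(u+1)+m₂]) and λ₂ = [α₁+α₃(u+1)³]/(m₁(u+1)³) + [α₃m₃(u+1)⁴ - α₁m₂]/(m₂m₃u(u+1)³). Then λ₁ = λ₂ if and only if α₁ = α₃m₃(u+1)³/m₂ or m₂ = -m₁m₃(u+1)²/(m₃u²+m₁). -/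
theorem lambda_equality_condition
    (m₁ m₂ m₃ : ℝ) (hm₁ : 0 < m₁) (hm₂ : 0 < m₂) (hm₃ : 0 < m₃)
    (α₁ α₂ α₃ : ℝ) (u : ℝ) (hu : 0 < u)
    (hα₂ : α₂ = u ^ 2 * (α₃ * m₃ * (u + 1) ^ 2 * (m₁ * (u + 1) + m₂ * u) +
        α₁ * m₂ * (m₃ * u - m₁)) / (m₁ * (u + 1) ^ 2 * (m₃ * (u + 1) + m₂))) :
    ((m₁ + m₂ + m₃) * (α₁ + α₃ * (u + 1) ^ 2) /
          (m₁ * (u + 1) ^ 2 * (m₃ * (u + 1) + m₂)) =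
        (α₁ + α₃ * (u + 1) ^ 3) / (m₁ * (u + 1) ^ 3) +
          (α₃ * m₃ * (u + 1) ^ 4 - α₁ * m₂) / (m₂ * m₃ * u * (u + 1) ^ 3)) ↔
      (α₁ = α₃ * m₃ * (u + 1) ^ 3 / m₂ ∨
        m₂ = -(m₁ * m₃ * (u + 1) ^ 2) / (m₃ * u ^ 2 + m₁)) := by
  have hu1 : (0:ℝ) < u + 1 := by linarith
  have hd : (0:ℝ) < m₃ * (u + 1) + m₂ := by positivity
  have hpos : (0:ℝ) < m₂ * (m₃ * u ^ 2 + m₁) + m₁ * m₃ * (u + 1) ^ 2 := by positivity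
  have hden : (0:ℝ) < m₃ * u ^ 2 + m₁ := by positivity
  have key : ((m₁ + m₂ + m₃) * (α₁ + α₃ * (u + 1) ^ 2) /
          (m₁ * (u + 1) ^ 2 * (m₃ * (u + 1) + m₂)) =
        (α₁ + α₃ * (u + 1) ^ 3) / (m₁ * (u + 1) ^ 3) +
          (α₃ * m₃ * (u + 1) ^ 4 - α₁ * m₂) / (m₂ * m₃ * u * (u + 1) ^ 3)) ↔
      (m₂ * α₁ - α₃ * m₃ * (u + 1) ^ 3) *
        (m₂ * (m₃ * u ^ 2 + m₁) + m₁ * m₃ * (u + 1) ^ 2) = 0 := by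
    rw [div_add_div _ _ (by positivity) (by positivity),
        div_eq_div_iff (by positivity) (by positivity)]
    constructor
    · intro h
      have h5 : m₁ * (u + 1) ^ 5 *
          ((m₂ * α₁ - α₃ * m₃ * (u + 1) ^ 3) *
            (m₂ * (m₃ * u ^ 2 + m₁) + m₁ * m₃ * (u + 1) ^ 2)) = 0 := by
        linear_combination h
      rcases mul_eq_zero.mp h5 with h6 | h6
      · exact absurd h6 (by positivity)
      · exact h6
    · intro h; linear_combination (m₁ * (u + 1) ^ 5) * h
  rw [key]
  constructor
  · intro h
    rcases mul_eq_zero.mp h with h1 | h2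
    · left
      field_simp
      linarith
    · exact absurd h2 (ne_of_gt hpos)
  · rintro (h | h)
    · apply mul_eq_zero.mpr; left
      rw [h]; field_simp; ring
    · exfalso
      have : m₂ * (m₃ * u ^ 2 + m₁) = -(m₁ * m₃ * (u + 1) ^ 2) := by
        rw [h]; field_simp
      nlinarith [this]
end
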